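/- Universal approximation of continuous symmetric functions on a simplex-ordered domain via sum-pooling (Deep Sets, scalar case): let f : [0,1]^n → ℝ be continuous and symmetric (invariant under coordinate permutations). Then for every ε > 0 there exist continuous functions h : [0,1] → ℝ^{n+1} and ζ : ℝ^{n+1} → ℝ such that |f(x) − ζ(Σᵢ h(xᵢ))| < ε for all x ∈ [0,1]^n. In fact one can take h(t) = (1, t, t², ..., tⁿ) and achieve exact equality, f(x) = ζ(Σᵢ h(xᵢ)). -/

import Mathlib

open Finset Polynomial

lemma ds_aeval_psum {n : ℕ} (x : Fin n → ℝ) (k : ℕ) :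
    MvPolynomial.aeval x (MvPolynomial.psum (Fin n) ℝ k) = ∑ i, x i ^ k := by
  simp [MvPolynomial.psum, map_sum]

lemma ds_esymm_eq_of_psum_eq {n : ℕ} (x y : Fin n → ℝ)
    (hp : ∀ k ≤ n, ∑ i, x i ^ k = ∑ i, y i ^ k) :
    ∀ k ≤ n, (Finset.univ.val.map x).esymm k = (Finset.univ.val.map y).esymm k := by
  intro k
  induction k using Nat.strong_induction_on with
  | _ k ih =>
    intro hk
    rcases Nat.eq_zero_or_pos k with h0 | hpos
    · subst h0; simp [Multiset.esymm]
    · have h1 := congrArg (MvPolynomial.aeval x) (MvPolynomial.mul_esymm_eq_sum (Fin n) ℝ k)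
      have h2 := congrArg (MvPolynomial.aeval y) (MvPolynomial.mul_esymm_eq_sum (Fin n) ℝ k)
      simp only [map_mul, map_natCast, map_sum, map_pow, map_neg, map_one,
        MvPolynomial.aeval_esymm_eq_multiset_esymm, ds_aeval_psum] at h1 h2
      have hsum : ∑ a ∈ antidiagonal k with a.1 < k,
            (-1:ℝ) ^ a.1 * (Finset.univ.val.map x).esymm a.1 * ∑ i, x i ^ a.2
          = ∑ a ∈ antidiagonal k with a.1 < k,
            (-1:ℝ) ^ a.1 * (Finset.univ.val.map y).esymm a.1 * ∑ i, y i ^ a.2 := by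
        refine Finset.sum_congr rfl ?_
        intro a ha
        simp only [Finset.mem_filter, Finset.HasAntidiagonal.mem_antidiagonal] at ha
        rw [ih a.1 ha.2 (le_trans (le_of_lt ha.2) hk),
          hp a.2 (le_trans (by omega : a.2 ≤ k) hk)]
      have hkne : (k : ℝ) ≠ 0 := Nat.cast_ne_zero.mpr hpos.ne'
      have heq : (k : ℝ) * (Finset.univ.val.map x).esymm k
          = (k : ℝ) * (Finset.univ.val.map y).esymm k := by
        rw [h1, hsum, ← h2]
      exact mul_left_cancel₀ hkne heq

lemma ds_multiset_eq_of_psum_eq {n : ℕ} (x y : Fin n → ℝ)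
    (hp : ∀ k ≤ n, ∑ i, x i ^ k = ∑ i, y i ^ k) :
    Multiset.map x Finset.univ.val = Multiset.map y Finset.univ.val := by
  have he := ds_esymm_eq_of_psum_eq x y hp
  set s := Multiset.map x Finset.univ.val with hs
  set t := Multiset.map y Finset.univ.val with ht
  have hcs : Multiset.card s = n := by simp [hs]
  have hct : Multiset.card t = n := by simp [ht]
  have hprod : (s.map fun a => X - C a).prod = (t.map fun a => X - C a).prod := by
    ext k
    rcases le_or_gt k n with hkn | hkn
    · rw [Multiset.prod_X_sub_C_coeff s (hcs ▸ hkn), Multiset.prod_X_sub_C_coeff t (hct ▸ hkn),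
        hcs, hct, he (n - k) (Nat.sub_le _ _)]
    · rw [Polynomial.coeff_eq_zero_of_natDegree_lt, Polynomial.coeff_eq_zero_of_natDegree_lt]
      · rw [Polynomial.natDegree_multiset_prod_X_sub_C_eq_card, hct]; exact hkn
      · rw [Polynomial.natDegree_multiset_prod_X_sub_C_eq_card, hcs]; exact hkn
  have := congrArg Polynomial.roots hprod
  rwa [Polynomial.roots_multiset_prod_X_sub_C, Polynomial.roots_multiset_prod_X_sub_C] at this

lemma ds_mono_eq_of_multiset_eq {n : ℕ} {x y : Fin n → ℝ} (hx : Monotone x) (hy : Monotone y)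
    (h : Multiset.map x Finset.univ.val = Multiset.map y Finset.univ.val) : x = y := by
  have hco : ∀ z : Fin n → ℝ, Multiset.map z Finset.univ.val = ((List.ofFn z : List ℝ) : Multiset ℝ) := by
    intro z
    rw [List.ofFn_eq_map]
    rfl
  rw [hco, hco, Multiset.coe_eq_coe] at h
  exact List.ofFn_injective (List.Perm.eq_of_sortedLE
    (List.sortedLE_ofFn_iff.2 hx) (List.sortedLE_ofFn_iff.2 hy) h)

lemma ds_closed_monotone (n : ℕ) : IsClosed {x : Fin n → ℝ | Monotone x} := by
  have : {x : Fin n → ℝ | Monotone x} =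
      ⋂ (p : Fin n × Fin n) (_ : p.1 ≤ p.2), {x | x p.1 ≤ x p.2} := by
    ext x
    simp only [Set.mem_setOf_eq, Set.mem_iInter]
    exact ⟨fun h p hp => h hp, fun h i j hij => h (i, j) hij⟩
  rw [this]
  exact isClosed_iInter fun p => isClosed_iInter fun _ =>
    isClosed_le (continuous_apply p.1) (continuous_apply p.2)

/-- universal approximation (in fact exact representation) of continuous symmetric
functions on [0,1]^n via sum-pooling with power-sum features. -/
theorem deep_sets_universal (n : ℕ) (f : (Fin n → ℝ) → ℝ)
    (hf : ContinuousOn f {x : Fin n → ℝ | ∀ i, x i ∈ Set.Icc (0:ℝ) 1})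
    (hsym : ∀ (π : Equiv.Perm (Fin n)) (x : Fin n → ℝ), f (x ∘ π) = f x) :
    (∀ ε > (0:ℝ), ∃ (h : ℝ → Fin (n+1) → ℝ) (ζ : (Fin (n+1) → ℝ) → ℝ),
      Continuous h ∧ Continuous ζ ∧
      ∀ x : Fin n → ℝ, (∀ i, x i ∈ Set.Icc (0:ℝ) 1) →
        |f x - ζ (∑ i, h (x i))| < ε) ∧
    (∃ ζ : (Fin (n+1) → ℝ) → ℝ, Continuous ζ ∧
      ∀ x : Fin n → ℝ, (∀ i, x i ∈ Set.Icc (0:ℝ) 1) →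
        f x = ζ (∑ i, fun k : Fin (n+1) => x i ^ (k : ℕ))) := by
  -- the exact-representation part implies everything
  suffices h2 : ∃ ζ : (Fin (n+1) → ℝ) → ℝ, Continuous ζ ∧
      ∀ x : Fin n → ℝ, (∀ i, x i ∈ Set.Icc (0:ℝ) 1) →
        f x = ζ (∑ i, fun k : Fin (n+1) => x i ^ (k : ℕ)) by
    obtain ⟨ζ, hζc, hζ⟩ := h2
    refine ⟨fun ε hε => ⟨fun t k => t ^ (k : ℕ), ζ, ?_, hζc, fun x hx => ?_⟩, ζ, hζc, hζ⟩
    · exact continuous_pi fun k => continuous_id.pow _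
    · rw [← hζ x hx, sub_self, abs_zero]; exact hε
  classical
  set K : Set (Fin n → ℝ) := {x | ∀ i, x i ∈ Set.Icc (0:ℝ) 1} with hK
  set Φ : (Fin n → ℝ) → (Fin (n+1) → ℝ) := fun x k => ∑ i, x i ^ (k : ℕ) with hΦ
  have hΦc : Continuous Φ :=
    continuous_pi fun k => continuous_finset_sum _ fun i _ => (continuous_apply i).pow _
  -- power sums determine the function on K
  have hΦinj : ∀ x y : Fin n → ℝ, Monotone x → Monotone y → Φ x = Φ y → x = y := by
    intro x y hx hy hxy
    refine ds_mono_eq_of_multiset_eq hx hy (ds_multiset_eq_of_psum_eq x y ?_)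
    intro k hk
    have := congrFun hxy ⟨k, Nat.lt_succ_of_le hk⟩
    simpa [hΦ] using this
  set Δ : Set (Fin n → ℝ) := K ∩ {x | Monotone x} with hΔ
  have hKc : IsCompact K := by
    have : K = Set.pi Set.univ fun _ : Fin n => Set.Icc (0:ℝ) 1 := by
      ext x; simp [hK, Set.mem_univ_pi, Set.mem_Icc, forall_and, Pi.le_def]
    rw [this]
    exact isCompact_univ_pi fun _ => isCompact_Icc
  have hΔc : IsCompact Δ := hKc.inter_right (ds_closed_monotone n)
  haveI : CompactSpace Δ := isCompact_iff_compactSpace.mp hΔc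
  set S : Set (Fin (n+1) → ℝ) := Φ '' Δ with hS
  -- the restricted map as an equiv
  have hmem : ∀ d : Δ, Φ (d : Fin n → ℝ) ∈ S := fun d => ⟨d, d.2, rfl⟩
  set e : Δ → S := fun d => ⟨Φ d, hmem d⟩ with he
  have hec : Continuous e := Continuous.subtype_mk (hΦc.comp continuous_subtype_val) _
  have hbij : Function.Bijective e := by
    constructor
    · intro a b hab
      have : Φ (a : Fin n → ℝ) = Φ b := congrArg Subtype.val hab
      exact Subtype.ext (hΦinj a b a.2.2 b.2.2 this)
    · rintro ⟨u, x, hxΔ, rfl⟩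
      exact ⟨⟨x, hxΔ⟩, rfl⟩
  set E : Δ ≃ S := Equiv.ofBijective e hbij with hE
  have hEc : Continuous (E : Δ → S) := hec
  set H : Δ ≃ₜ S := Continuous.homeoOfEquivCompactToT2 (f := E) hEc with hH
  -- ζ₀ on S
  have hfΔ : Continuous (Δ.restrict f) := ContinuousOn.restrict (hf.mono Set.inter_subset_left)
  set ζ₀ : C(S, ℝ) := ⟨fun u => f (H.symm u), hfΔ.comp H.symm.continuous⟩ with hζ₀
  have hSclosed : IsClosed S := (hΔc.image hΦc).isClosed
  obtain ⟨g, hg⟩ := ContinuousMap.exists_restrict_eq hSclosed ζ₀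
  refine ⟨g, g.continuous, ?_⟩
  intro x hx
  -- sorted version of x
  set σ := Tuple.sort x with hσ
  have hx'Δ : (x ∘ σ) ∈ Δ := ⟨fun i => hx (σ i), Tuple.monotone_sort x⟩
  have hΦeq : Φ (x ∘ σ) = Φ x := by
    funext k
    exact Equiv.sum_comp σ (fun i => x i ^ (k : ℕ))
  have hsum : (∑ i, fun k : Fin (n+1) => x i ^ (k : ℕ)) = Φ x := by
    funext k
    simp [hΦ, Finset.sum_apply]
  rw [hsum]
  have hgS : g (Φ x) = ζ₀ ⟨Φ x, hΦeq ▸ hmem ⟨_, hx'Δ⟩⟩ := by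
    have := congrFun (congrArg ContinuousMap.toFun hg) ⟨Φ x, hΦeq ▸ hmem ⟨_, hx'Δ⟩⟩
    simpa using this
  rw [hgS]
  -- evaluate ζ₀
  set u : S := ⟨Φ x, hΦeq ▸ hmem ⟨_, hx'Δ⟩⟩ with hu
  set d : Δ := H.symm u with hd
  have hHd : Φ (d : Fin n → ℝ) = Φ x := congrArg Subtype.val (H.apply_symm_apply u)
  have hdx' : (d : Fin n → ℝ) = x ∘ σ :=
    hΦinj _ _ d.2.2 (Tuple.monotone_sort x) (hHd.trans hΦeq.symm)
  show f x = f (H.symm u)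
  rw [show ((H.symm u : Δ) : Fin n → ℝ) = x ∘ σ from hdx', hsym σ x]
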